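/- Let P be a tree-shaped polyomino and G a guard set for P under r-visibility. Then for every inner border b of P there is a guard g ∈ G such that b ⊆ V(g), i.e., the whole segment b is r-seen by a single guard. -/

import Mathlib

open Computability Turing

noncomputable section DispersiveAGP

/-- The point in the plane corresponding to an integer lattice point. -/
def toPt (v : ℤ × ℤ) : ℝ × ℝ := ((v.1 : ℝ), (v.2 : ℝ))

/-- The closed unit square (cell) with lower-left corner `c`. -/
def cellSet (c : ℤ × ℤ) : Set (ℝ × ℝ) :=
  Set.Icc (c.1 : ℝ) ((c.1 : ℝ) + 1) ×ˢ Set.Icc (c.2 : ℝ) ((c.2 : ℝ) + 1)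

/-- The region of the plane covered by a set of cells. -/
def region (C : Finset (ℤ × ℤ)) : Set (ℝ × ℝ) := ⋃ c ∈ C, cellSet c

/-- Two cells are adjacent if they share a side. -/
def cellAdj (c d : ℤ × ℤ) : Prop := (c.1 - d.1).natAbs + (c.2 - d.2).natAbs = 1

/-- A polyomino: a nonempty finite set of cells, edge-connected. -/
def IsPolyomino (C : Finset (ℤ × ℤ)) : Prop :=
  C.Nonempty ∧ ∀ c ∈ C, ∀ d ∈ C,
    Relation.ReflTransGen (fun a b => a ∈ C ∧ b ∈ C ∧ cellAdj a b) c d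

/-- Number of cells of `C` incident to the lattice point `v`. -/
def cornerCount (C : Finset (ℤ × ℤ)) (v : ℤ × ℤ) : ℕ :=
  (if (v.1 - 1, v.2 - 1) ∈ C then 1 else 0) + (if (v.1, v.2 - 1) ∈ C then 1 else 0) +
  (if (v.1 - 1, v.2) ∈ C then 1 else 0) + (if (v.1, v.2) ∈ C then 1 else 0)

/-- `v` is a vertex of the polyomino `C` (a corner point of its boundary). -/
def IsVertex (C : Finset (ℤ × ℤ)) (v : ℤ × ℤ) : Prop :=
  cornerCount C v = 1 ∨ cornerCount C v = 3 ∨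
    (cornerCount C v = 2 ∧
      (((v.1 - 1, v.2 - 1) ∈ C ∧ (v.1, v.2) ∈ C) ∨
        ((v.1 - 1, v.2) ∈ C ∧ (v.1, v.2 - 1) ∈ C)))

/-- r-visibility: `p` sees `q` if the spanned axis-aligned rectangle lies in the polyomino. -/
def rSees (C : Finset (ℤ × ℤ)) (p q : ℝ × ℝ) : Prop :=
  Set.uIcc p.1 q.1 ×ˢ Set.uIcc p.2 q.2 ⊆ region C

/-- The r-visibility region of a point. -/
def vis (C : Finset (ℤ × ℤ)) (p : ℝ × ℝ) : Set (ℝ × ℝ) := {q | rSees C p q}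

/-- A (vertex) guard set of a polyomino. -/
def IsGuardSet (C : Finset (ℤ × ℤ)) (G : Finset (ℤ × ℤ)) : Prop :=
  (∀ g ∈ G, IsVertex C g) ∧ ∀ p ∈ region C, ∃ g ∈ G, rSees C (toPt g) p

/-- L1 distance in the plane. -/
def l1 (p q : ℝ × ℝ) : ℝ := |p.1 - q.1| + |p.2 - q.2|

/-- The L1 length of a polygonal chain. -/
def chainLen (l : List (ℝ × ℝ)) : ℝ := ((l.zip l.tail).map fun p => l1 p.1 p.2).sum

/-- A polygonal chain all of whose segments lie inside `S`. -/
def IsChainIn (S : Set (ℝ × ℝ)) (l : List (ℝ × ℝ)) : Prop :=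
  (∀ p ∈ l, p ∈ S) ∧ List.Chain' (fun a b => segment ℝ a b ⊆ S) l

/-- Geodesic L1 distance inside `S`: infimum of L1 lengths of polygonal chains
inside `S` joining the two points. -/
def geodDist (S : Set (ℝ × ℝ)) (p q : ℝ × ℝ) : ℝ :=
  sInf {d | ∃ l : List (ℝ × ℝ), l.head? = some p ∧ l.getLast? = some q ∧
    IsChainIn S l ∧ d = chainLen l}

/-- Dispersion distance of a guard set: minimum pairwise geodesic L1 distance. -/
def dispersion (C : Finset (ℤ × ℤ)) (G : Finset (ℤ × ℤ)) : ℝ :=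
  sInf {d | ∃ g ∈ G, ∃ g' ∈ G, g ≠ g' ∧ d = geodDist (region C) (toPt g) (toPt g')}

/-- A polyomino is simple if its complement in the plane is connected (no holes). -/
def SimplePoly (C : Finset (ℤ × ℤ)) : Prop := IsConnected (region C)ᶜ

/-- A polyomino is thin if it contains no 2×2 block of cells. -/
def Thin (C : Finset (ℤ × ℤ)) : Prop :=
  ∀ x y : ℤ, ¬((x, y) ∈ C ∧ (x + 1, y) ∈ C ∧ (x, y + 1) ∈ C ∧ (x + 1, y + 1) ∈ C)

/-- The dual graph of a polyomino: cells as vertices, side-adjacency as edges. -/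
def dualGraph (C : Finset (ℤ × ℤ)) : SimpleGraph {c // c ∈ C} where
  Adj a b := cellAdj a.1 b.1
  symm := by
    constructor
    intro a b h
    unfold cellAdj at *
    omega
  loopless := by
    constructor
    intro a h
    unfold cellAdj at h
    omega

/-- A polyomino is tree-shaped if its dual graph is a tree. -/
def TreeShaped (C : Finset (ℤ × ℤ)) : Prop := (dualGraph C).IsTree


section Rects

/-- An axis-aligned closed rectangle. -/
def IsRect (T : Set (ℝ × ℝ)) : Prop :=
  ∃ a b c d : ℝ, a ≤ b ∧ c ≤ d ∧ T = Set.Icc a b ×ˢ Set.Icc c d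

/-- A maximal axis-aligned rectangle contained in the polyomino. -/
def MaxRect (C : Finset (ℤ × ℤ)) (T : Set (ℝ × ℝ)) : Prop :=
  IsRect T ∧ T ⊆ region C ∧ ∀ T', IsRect T' → T' ⊆ region C → T ⊆ T' → T' = T

/-- A border of the polyomino: a unit axis-parallel segment with integer endpoints,
inside the polyomino, lying on the side of a maximal rectangle. -/
def IsBorder (C : Finset (ℤ × ℤ)) (p1 p2 : ℝ × ℝ) : Prop :=
  (∃ v w : ℤ × ℤ, p1 = toPt v ∧ p2 = toPt w) ∧ l1 p1 p2 = 1 ∧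
    (p1.1 = p2.1 ∨ p1.2 = p2.2) ∧ segment ℝ p1 p2 ⊆ region C ∧
    ∃ T, MaxRect C T ∧ segment ℝ p1 p2 ⊆ frontier T

/-- An inner border: a border not on the boundary of the polyomino. -/
def InnerBorder (C : Finset (ℤ × ℤ)) (p1 p2 : ℝ × ℝ) : Prop :=
  IsBorder C p1 p2 ∧ midpoint ℝ p1 p2 ∈ interior (region C)

/-- An outer border: a length-1 side of a maximal rectangle on the boundary. -/
def OuterBorder (C : Finset (ℤ × ℤ)) (p1 p2 : ℝ × ℝ) : Prop :=
  IsBorder C p1 p2 ∧ segment ℝ p1 p2 ⊆ frontier (region C)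

end Rects


/-- Auxiliary: points in the same unit-height row strip share cells. -/
lemma row_mem (C : Finset (ℤ × ℤ)) {s u0 u : ℝ} {y : ℤ}
    (h0 : (y:ℝ) < u0) (h1 : u0 < (y:ℝ)+1) (h2 : (y:ℝ) ≤ u) (h3 : u ≤ (y:ℝ)+1)
    (hm : (s, u0) ∈ region C) : (s, u) ∈ region C := by
  simp only [region, Set.mem_iUnion, cellSet, Set.mem_prod, Set.mem_Icc] at hm ⊢
  obtain ⟨c, hc, ⟨hs1, hs2⟩, hu1, hu2⟩ := hm
  have hcy : c.2 = y := by
    have h4 : (c.2:ℝ) < (y:ℝ)+1 := lt_of_le_of_lt hu1 h1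
    have h5 : (y:ℝ) < (c.2:ℝ)+1 := lt_of_lt_of_le h0 hu2
    have h6 : c.2 < y+1 := by exact_mod_cast h4
    have h7 : y < c.2+1 := by exact_mod_cast h5
    omega
  exact ⟨c, hc, ⟨hs1, hs2⟩, by rw [hcy]; exact ⟨h2, h3⟩⟩

lemma col_mem (C : Finset (ℤ × ℤ)) {t s0 s : ℝ} {x : ℤ}
    (h0 : (x:ℝ) < s0) (h1 : s0 < (x:ℝ)+1) (h2 : (x:ℝ) ≤ s) (h3 : s ≤ (x:ℝ)+1)
    (hm : (s0, t) ∈ region C) : (s, t) ∈ region C := by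
  simp only [region, Set.mem_iUnion, cellSet, Set.mem_prod, Set.mem_Icc] at hm ⊢
  obtain ⟨c, hc, ⟨hs1, hs2⟩, hu1, hu2⟩ := hm
  have hcx : c.1 = x := by
    have h4 : (c.1:ℝ) < (x:ℝ)+1 := lt_of_le_of_lt hs1 h1
    have h5 : (x:ℝ) < (c.1:ℝ)+1 := lt_of_lt_of_le h0 hs2
    have h6 : c.1 < x+1 := by exact_mod_cast h4
    have h7 : x < c.1+1 := by exact_mod_cast h5
    omega
  exact ⟨c, hc, by rw [hcx]; exact ⟨h2, h3⟩, hu1, hu2⟩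

lemma key_vert (C : Finset (ℤ × ℤ)) (a b x t : ℝ) (y : ℤ)
    (h1 : (y:ℝ) ≤ t) (h2 : t ≤ (y:ℝ)+1)
    (hsee : Set.uIcc a x ×ˢ Set.uIcc b ((y:ℝ)+1/2) ⊆ region C) :
    Set.uIcc a x ×ˢ Set.uIcc b t ⊆ region C := by
  rintro ⟨s, u⟩ ⟨hs, hu⟩
  by_cases hcase : u ∈ Set.uIcc b ((y:ℝ)+1/2)
  · exact hsee ⟨hs, hcase⟩
  · have hmidmem : (s, (y:ℝ)+1/2) ∈ region C := hsee ⟨hs, Set.right_mem_uIcc⟩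
    rw [Set.mem_uIcc] at hu hcase
    push_neg at hcase
    have hb1 : (y:ℝ) ≤ u ∧ u ≤ (y:ℝ)+1 := by
      rcases hu with ⟨h3, h4⟩ | ⟨h3, h4⟩
      · have := hcase.1 h3
        constructor <;> linarith
      · refine ⟨by linarith, ?_⟩
        by_contra h
        push_neg at h
        have := hcase.2 (by linarith)
        linarith
    exact row_mem C (by linarith) (by linarith) hb1.1 hb1.2 hmidmem

lemma key_horiz (C : Finset (ℤ × ℤ)) (a b yc t : ℝ) (x : ℤ)
    (h1 : (x:ℝ) ≤ t) (h2 : t ≤ (x:ℝ)+1)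
    (hsee : Set.uIcc a ((x:ℝ)+1/2) ×ˢ Set.uIcc b yc ⊆ region C) :
    Set.uIcc a t ×ˢ Set.uIcc b yc ⊆ region C := by
  rintro ⟨s, u⟩ ⟨hs, hu⟩
  by_cases hcase : s ∈ Set.uIcc a ((x:ℝ)+1/2)
  · exact hsee ⟨hcase, hu⟩
  · have hmidmem : ((x:ℝ)+1/2, u) ∈ region C := hsee ⟨Set.right_mem_uIcc, hu⟩
    rw [Set.mem_uIcc] at hs hcase
    push_neg at hcase
    have hb1 : (x:ℝ) ≤ s ∧ s ≤ (x:ℝ)+1 := by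
      rcases hs with ⟨h3, h4⟩ | ⟨h3, h4⟩
      · have := hcase.1 h3
        constructor <;> linarith
      · refine ⟨by linarith, ?_⟩
        by_contra h
        push_neg at h
        have := hcase.2 (by linarith)
        linarith
    exact col_mem C (by linarith) (by linarith) hb1.1 hb1.2 hmidmem

/-- In a tree-shaped polyomino, every inner border is entirely r-seen by a single
guard of any guard set. -/
theorem inner_border_seen_by_single_guard
    (C : Finset (ℤ × ℤ)) (hC : IsPolyomino C) (ht : TreeShaped C)
    (G : Finset (ℤ × ℤ)) (hG : IsGuardSet C G)
    (p1 p2 : ℝ × ℝ) (hb : InnerBorder C p1 p2) :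
    ∃ g ∈ G, segment ℝ p1 p2 ⊆ vis C (toPt g) := by
  obtain ⟨⟨⟨v, w, hp1, hp2⟩, hl1, haxis, hseg, -⟩, hmid⟩ := hb
  subst hp1; subst hp2
  have hm : midpoint ℝ (toPt v) (toPt w) ∈ region C := interior_subset hmid
  obtain ⟨g, hgG, hsee⟩ := hG.2 _ hm
  refine ⟨g, hgG, ?_⟩
  have hmideq : midpoint ℝ (toPt v) (toPt w)
      = (((v.1:ℝ)+(w.1:ℝ))/2, ((v.2:ℝ)+(w.2:ℝ))/2) := by
    simp [midpoint, Prod.ext_iff, AffineMap.lineMap_apply, toPt]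
    constructor <;> ring
  rw [hmideq] at hsee
  simp only [rSees, toPt] at hsee
  simp only [l1, toPt] at hl1
  rintro p ⟨α, β, hα, hβ, hαβ, rfl⟩
  simp only [vis, rSees, toPt, Set.mem_setOf_eq, Prod.fst_add, Prod.snd_add,
    Prod.smul_fst, Prod.smul_snd, smul_eq_mul]
  simp only [toPt] at haxis
  rcases haxis with hx | hy
  · -- vertical border
    have habs : |v.2 - w.2| = 1 := by
      have h0 : |(v.2:ℝ) - (w.2:ℝ)| = 1 := by
        rw [hx] at hl1; simp at hl1; linarith [hl1]
      exact_mod_cast h0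
    have e1 : ((v.1:ℝ)+(w.1:ℝ))/2 = (v.1:ℝ) := by rw [← hx]; ring
    have hfst : α * (v.1:ℝ) + β * (w.1:ℝ) = (v.1:ℝ) := by
      rw [← hx]; linear_combination (v.1:ℝ) * hαβ
    rw [e1] at hsee
    rw [hfst]
    rcases (abs_eq (by norm_num : (0:ℤ) ≤ 1)).mp habs with h | h
    · -- v.2 = w.2 + 1
      have hcast : (v.2:ℝ) = (w.2:ℝ) + 1 := by
        have : v.2 = w.2 + 1 := by omega
        exact_mod_cast this
      have e2 : ((v.2:ℝ)+(w.2:ℝ))/2 = (w.2:ℝ)+1/2 := by rw [hcast]; ring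
      rw [e2] at hsee
      have hval : α * (v.2:ℝ) + β * (w.2:ℝ) = (w.2:ℝ) + α := by
        linear_combination α * hcast + (w.2:ℝ) * hαβ
      exact key_vert C _ _ _ _ w.2 (by rw [hval]; linarith) (by rw [hval]; linarith) hsee
    · -- w.2 = v.2 + 1
      have hcast : (w.2:ℝ) = (v.2:ℝ) + 1 := by
        have : w.2 = v.2 + 1 := by omega
        exact_mod_cast this
      have e2 : ((v.2:ℝ)+(w.2:ℝ))/2 = (v.2:ℝ)+1/2 := by rw [hcast]; ring
      rw [e2] at hsee
      have hval : α * (v.2:ℝ) + β * (w.2:ℝ) = (v.2:ℝ) + β := by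
        linear_combination β * hcast + (v.2:ℝ) * hαβ
      exact key_vert C _ _ _ _ v.2 (by rw [hval]; linarith) (by rw [hval]; linarith) hsee
  · -- horizontal border
    have habs : |v.1 - w.1| = 1 := by
      have h0 : |(v.1:ℝ) - (w.1:ℝ)| = 1 := by
        rw [hy] at hl1; simp at hl1; linarith [hl1]
      exact_mod_cast h0
    have e1 : ((v.2:ℝ)+(w.2:ℝ))/2 = (v.2:ℝ) := by rw [← hy]; ring
    have hsnd : α * (v.2:ℝ) + β * (w.2:ℝ) = (v.2:ℝ) := by
      rw [← hy]; linear_combination (v.2:ℝ) * hαβ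
    rw [e1] at hsee
    rw [hsnd]
    rcases (abs_eq (by norm_num : (0:ℤ) ≤ 1)).mp habs with h | h
    · have hcast : (v.1:ℝ) = (w.1:ℝ) + 1 := by
        have : v.1 = w.1 + 1 := by omega
        exact_mod_cast this
      have e2 : ((v.1:ℝ)+(w.1:ℝ))/2 = (w.1:ℝ)+1/2 := by rw [hcast]; ring
      rw [e2] at hsee
      have hval : α * (v.1:ℝ) + β * (w.1:ℝ) = (w.1:ℝ) + α := by
        linear_combination α * hcast + (w.1:ℝ) * hαβ
      exact key_horiz C _ _ _ _ w.1 (by rw [hval]; linarith) (by rw [hval]; linarith) hsee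
    · have hcast : (w.1:ℝ) = (v.1:ℝ) + 1 := by
        have : w.1 = v.1 + 1 := by omega
        exact_mod_cast this
      have e2 : ((v.1:ℝ)+(w.1:ℝ))/2 = (v.1:ℝ)+1/2 := by rw [hcast]; ring
      rw [e2] at hsee
      have hval : α * (v.1:ℝ) + β * (w.1:ℝ) = (v.1:ℝ) + β := by
        linear_combination β * hcast + (v.1:ℝ) * hαβ
      exact key_horiz C _ _ _ _ v.1 (by rw [hval]; linarith) (by rw [hval]; linarith) hsee


end DispersiveAGP
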